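/- Let G be a locally compact Hausdorff group and let x ∈ G be an element of infinite order. Then either the cyclic subgroup generated by x is discrete and infinite, or the closure of the cyclic subgroup generated by x is a compact infinite abelian group. -/

import Mathlib

open Set

/-- The set of powers `x ^ m` for `m ≥ N`. -/
private def tailSet {G : Type*} [Group G] (x : G) (N : ℤ) : Set G :=
  (fun n : ℤ => x ^ n) '' Set.Ici N

private lemma tailSet_mono {G : Type*} [Group G] (x : G) {M N : ℤ} (h : M ≤ N) :
    tailSet x N ⊆ tailSet x M :=
  Set.image_mono (Set.Ici_subset_Ici.2 h)

private lemma tailSet_subset_zpowers {G : Type*} [Group G] (x : G) (N : ℤ) :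
    tailSet x N ⊆ (Subgroup.zpowers x : Set G) := by
  rintro _ ⟨m, -, rfl⟩
  exact ⟨m, rfl⟩

/-- Core compactness lemma (Weil): if some point lies in the closure of every tail
`{x ^ m : m ≥ N}`, then the closure of the cyclic subgroup generated by `x` is compact. -/
private lemma weil_compact {G : Type*} [Group G] [TopologicalSpace G] [IsTopologicalGroup G]
    [LocallyCompactSpace G] [T2Space G] (x : G)
    (hz : ∃ z : G, ∀ N : ℤ, z ∈ closure (tailSet x N)) :
    IsCompact (closure (Subgroup.zpowers x : Set G)) := by
  classical
  obtain ⟨z, hz⟩ := hz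
  -- the identity lies in the closure of every tail
  have hzinv : z⁻¹ ∈ closure (Subgroup.zpowers x : Set G) := by
    have hzmem : z ∈ (Subgroup.zpowers x).topologicalClosure := by
      exact closure_mono (tailSet_subset_zpowers x 0) (hz 0)
    exact (Subgroup.zpowers x).topologicalClosure.inv_mem hzmem
  have he : ∀ N : ℤ, (1 : G) ∈ closure (tailSet x N) := by
    intro N
    rw [mem_closure_iff_nhds]
    intro t ht
    have hmul : ContinuousAt (fun p : G × G => p.1 * p.2) (z, z⁻¹) :=
      (continuous_mul).continuousAt
    have ht' : t ∈ nhds ((z, z⁻¹).1 * (z, z⁻¹).2) := by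
      rwa [mul_inv_cancel]
    have hpre : (fun p : G × G => p.1 * p.2) ⁻¹' t ∈ nhds (z, z⁻¹) :=
      hmul.preimage_mem_nhds ht'
    rw [mem_nhds_prod_iff] at hpre
    obtain ⟨U₁, hU₁, U₂, hU₂, hsub⟩ := hpre
    obtain ⟨g, hgU₂, k, rfl⟩ := (mem_closure_iff_nhds.1 hzinv) U₂ hU₂
    obtain ⟨y, hyU₁, m, hm, rfl⟩ := (mem_closure_iff_nhds.1 (hz (N - k))) U₁ hU₁
    refine ⟨x ^ m * x ^ k, ?_, ?_⟩
    · exact hsub (Set.mk_mem_prod hyU₁ hgU₂)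
    · refine ⟨m + k, ?_, by simp [zpow_add]⟩
      have : N - k ≤ m := hm
      simpa using by linarith
  -- all powers lie in the closure of every tail
  have hpow : ∀ j N : ℤ, x ^ j ∈ closure (tailSet x N) := by
    intro j N
    have h1 := he (N - j)
    have himg : x ^ j ∈ (fun g => x ^ j * g) '' closure (tailSet x (N - j)) :=
      ⟨1, h1, mul_one _⟩
    have hsub1 : (fun g => x ^ j * g) '' closure (tailSet x (N - j)) ⊆
        closure ((fun g => x ^ j * g) '' tailSet x (N - j)) :=
      image_closure_subset_closure_image (continuous_mul_left _)
    have hsub2 : (fun g => x ^ j * g) '' tailSet x (N - j) ⊆ tailSet x N := by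
      rintro _ ⟨_, ⟨m, hm, rfl⟩, rfl⟩
      refine ⟨j + m, ?_, by simp [zpow_add]⟩
      have : N - j ≤ m := hm
      simpa using by linarith
    exact closure_mono hsub2 (hsub1 himg)
  have hCsub : ∀ N : ℤ, closure (Subgroup.zpowers x : Set G) ⊆ closure (tailSet x N) := by
    intro N
    refine closure_minimal ?_ isClosed_closure
    rw [Subgroup.coe_zpowers]
    rintro _ ⟨j, rfl⟩
    exact hpow j N
  -- a compact neighborhood of 1
  obtain ⟨K, hKc, hKn⟩ := exists_compact_mem_nhds (1 : G)
  set V : Set G := interior K with hVdef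
  have hV : IsOpen V := isOpen_interior
  have h1V : (1 : G) ∈ V := mem_interior_iff_mem_nhds.2 hKn
  have hVK : V ⊆ K := interior_subset
  -- cover the compact piece of the closure by translates `x ^ m * V`, `m ≥ 1`
  set Z : Set G := closure (Subgroup.zpowers x : Set G) ∩ K with hZdef
  have hZc : IsCompact Z := hKc.inter_left isClosed_closure
  set U : {m : ℤ // 1 ≤ m} → Set G := fun m => (fun g => x ^ (m : ℤ) * g) '' V with hUdef
  have hUopen : ∀ m, IsOpen (U m) := fun m => (isOpenMap_mul_left _) V hV
  have hZcover : Z ⊆ ⋃ m, U m := by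
    rintro g ⟨hgC, hgK⟩
    have hg1 : g ∈ closure (tailSet x 1) := hCsub 1 hgC
    have hW : IsOpen ((fun v => g * v⁻¹) '' V) := by
      have : (fun v => g * v⁻¹) '' V = (fun v => g * v) '' V⁻¹ := by
        ext y
        constructor
        · rintro ⟨v, hv, rfl⟩; exact ⟨v⁻¹, Set.inv_mem_inv.2 hv, rfl⟩
        · rintro ⟨v, hv, rfl⟩; exact ⟨v⁻¹, hv, by simp⟩
      rw [this]
      exact (isOpenMap_mul_left _) _ hV.inv
    have hgW : g ∈ (fun v => g * v⁻¹) '' V := ⟨1, h1V, by simp⟩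
    obtain ⟨y, hy1, hy2⟩ :=
      (mem_closure_iff_nhds.1 hg1) _ (hW.mem_nhds hgW)
    obtain ⟨v, hvV, hveq⟩ := hy1
    obtain ⟨m, hm, rfl⟩ := hy2
    refine Set.mem_iUnion.2 ⟨⟨m, hm⟩, v, hvV, ?_⟩
    have : x ^ m = g * v⁻¹ := hveq.symm
    rw [this]
    group
  obtain ⟨s, hscover⟩ := hZc.elim_finite_subcover U hUopen hZcover
  -- the finite index set is nonempty since 1 ∈ Z
  have h1Z : (1 : G) ∈ Z :=
    ⟨subset_closure (Subgroup.one_mem _), mem_of_mem_nhds hKn⟩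
  have h1cov := hscover h1Z
  rw [Set.mem_iUnion₂] at h1cov
  obtain ⟨i₀, hi₀s, -⟩ := h1cov
  have hsne : s.Nonempty := ⟨i₀, hi₀s⟩
  set ρ : ℤ := s.sup' hsne (fun m => (m : ℤ)) with hρdef
  have hρ1 : 1 ≤ ρ := le_trans i₀.2 (Finset.le_sup' _ hi₀s)
  have hρle : ∀ m ∈ s, (m : ℤ) ≤ ρ := fun m hm => Finset.le_sup' _ hm
  -- syndeticity: every window of length ρ contains an exponent returning to K
  have hsyn : ∀ t : ℤ, ∃ r : ℤ, t ≤ r ∧ r ≤ t + ρ ∧ x ^ r ∈ K := by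
    intro t
    have Hinh : ∃ r : ℤ, t ≤ r ∧ x ^ r ∈ K := by
      obtain ⟨y, hyK, m, hm, rfl⟩ := (mem_closure_iff_nhds.1 (he t)) K hKn
      exact ⟨m, hm, hyK⟩
    have Hbdd : ∃ b : ℤ, ∀ r : ℤ, (t ≤ r ∧ x ^ r ∈ K) → b ≤ r := ⟨t, fun r hr => hr.1⟩
    obtain ⟨r, ⟨htr, hrK⟩, hmin⟩ := Int.exists_least_of_bdd Hbdd Hinh
    by_cases hcase : r ≤ t + ρ
    · exact ⟨r, htr, hcase, hrK⟩
    · exfalso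
      push_neg at hcase
      have hrZ : x ^ r ∈ Z := ⟨subset_closure ⟨r, rfl⟩, hrK⟩
      have := hscover hrZ
      rw [Set.mem_iUnion₂] at this
      obtain ⟨m, hms, v, hvV, hveq⟩ := this
      -- x ^ m * v = x ^ r, so x ^ (r - m) = v ∈ V ⊆ K
      have hval : x ^ (r - (m : ℤ)) = v := by
        have : v = (x ^ (m : ℤ))⁻¹ * x ^ r := by
          rw [← hveq]; group
        rw [this, ← zpow_neg, ← zpow_add]
        ring_nf
      have hPrm : t ≤ r - (m : ℤ) ∧ x ^ (r - (m : ℤ)) ∈ K := by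
        constructor
        · have := hρle m hms; linarith
        · rw [hval]; exact hVK hvV
      have := hmin _ hPrm
      have hm1 : 1 ≤ (m : ℤ) := m.2
      linarith
  -- conclude: all powers lie in a fixed compact set
  set Cbig : Set G := ⋃ i ∈ Finset.Icc (0 : ℤ) ρ, (fun g => g * x ^ (-i)) '' K with hCbigdef
  have hCbigc : IsCompact Cbig :=
    (Finset.Icc (0 : ℤ) ρ).isCompact_biUnion
      (fun i _ => hKc.image (continuous_mul_right _))
  have hsubC : (Subgroup.zpowers x : Set G) ⊆ Cbig := by
    rw [Subgroup.coe_zpowers]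
    rintro _ ⟨n, rfl⟩
    obtain ⟨r, hnr, hrρ, hrK⟩ := hsyn n
    refine Set.mem_iUnion₂.2 ⟨r - n, ?_, ?_⟩
    · rw [Finset.mem_Icc]; constructor <;> linarith
    · refine ⟨x ^ r, hrK, ?_⟩
      show x ^ r * x ^ (-(r - n)) = x ^ n
      rw [← zpow_add]
      ring_nf
  have hclosub : closure (Subgroup.zpowers x : Set G) ⊆ Cbig :=
    closure_minimal hsubC hCbigc.isClosed
  exact IsCompact.of_isClosed_subset hCbigc isClosed_closure hclosub

/-- For an element `x` of infinite order in a locally compact Hausdorff group, either the cyclic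
subgroup generated by `x` is discrete and infinite, or its closure is a compact infinite
abelian group. -/
theorem zpowers_discrete_or_closure_compact (G : Type*) [Group G] [TopologicalSpace G]
    [IsTopologicalGroup G] [LocallyCompactSpace G] [T2Space G] (x : G) (hx : ¬ IsOfFinOrder x) :
    (DiscreteTopology (Subgroup.zpowers x) ∧ (Subgroup.zpowers x : Set G).Infinite) ∨
      (IsCompact (closure (Subgroup.zpowers x : Set G)) ∧
        (closure (Subgroup.zpowers x : Set G)).Infinite ∧
        ∀ a ∈ closure (Subgroup.zpowers x : Set G), ∀ b ∈ closure (Subgroup.zpowers x : Set G),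
          a * b = b * a) := by
  classical
  -- basic facts: infinitude and commutativity
  have hinj : Function.Injective (fun n : ℤ => x ^ n) :=
    injective_zpow_iff_not_isOfFinOrder.2 hx
  have hinfset : (Subgroup.zpowers x : Set G).Infinite := by
    rw [Subgroup.coe_zpowers]
    exact Set.infinite_range_of_injective hinj
  have hinfclo : (closure (Subgroup.zpowers x : Set G)).Infinite :=
    hinfset.mono subset_closure
  have hcomm : ∀ a ∈ closure (Subgroup.zpowers x : Set G),
      ∀ b ∈ closure (Subgroup.zpowers x : Set G), a * b = b * a := by
    have h1 : ∀ a ∈ (Subgroup.zpowers x : Set G),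
        ∀ b ∈ closure (Subgroup.zpowers x : Set G), a * b = b * a := by
      intro a ha b hb
      have hclosed : IsClosed {c : G | a * c = c * a} :=
        isClosed_eq (continuous_mul_left a) (continuous_mul_right a)
      have hsub : (Subgroup.zpowers x : Set G) ⊆ {c : G | a * c = c * a} := by
        rw [Subgroup.coe_zpowers]
        rintro _ ⟨k, rfl⟩
        rw [Subgroup.coe_zpowers] at ha
        obtain ⟨j, rfl⟩ := ha
        exact (zpow_mul_comm x j k)
      exact closure_minimal hsub hclosed hb
    intro a ha b hb
    have hclosed : IsClosed {c : G | c * b = b * c} :=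
      isClosed_eq (continuous_mul_right b) (continuous_mul_left b)
    have hsub : (Subgroup.zpowers x : Set G) ⊆ {c : G | c * b = b * c} :=
      fun c hc => h1 c hc b hb
    exact closure_minimal hsub hclosed ha
  -- case analysis
  by_cases hp : ∃ z : G, ∀ N : ℤ, z ∈ closure (tailSet x N)
  · exact Or.inr ⟨weil_compact x hp, hinfclo, hcomm⟩
  by_cases hn : ∃ z : G, ∀ N : ℤ, z ∈ closure (tailSet x⁻¹ N)
  · refine Or.inr ⟨?_, hinfclo, hcomm⟩
    have := weil_compact x⁻¹ hn
    rwa [Subgroup.zpowers_inv] at this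
  -- remaining case: returns to every compact set are finite, hence discrete
  left
  refine ⟨?_, hinfset⟩
  obtain ⟨K, hKc, hKn⟩ := exists_compact_mem_nhds (1 : G)
  have hfin : {n : ℤ | x ^ n ∈ K}.Finite := by
    by_contra hinf
    rw [← Set.not_infinite, not_not] at hinf
    have hbdd : ¬ (BddAbove {n : ℤ | x ^ n ∈ K} ∧ BddBelow {n : ℤ | x ^ n ∈ K}) := by
      rintro ⟨⟨a, ha⟩, ⟨b, hb⟩⟩
      have : {n : ℤ | x ^ n ∈ K} ⊆ Set.Icc b a := fun n hn => ⟨hb hn, ha hn⟩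
      exact hinf ((Set.finite_Icc b a).subset this)
    rw [not_and_or] at hbdd
    rcases hbdd with hup | hdown
    · -- returns unbounded above: build a cluster point of positive tails
      apply hp
      rw [not_bddAbove_iff] at hup
      set D : ℕ → Set G := fun N => closure (tailSet x (N : ℤ)) ∩ K with hDdef
      have hDne : ∀ N, (D N).Nonempty := by
        intro N
        obtain ⟨n, hnK, hNn⟩ := hup (N : ℤ)
        exact ⟨x ^ n, subset_closure ⟨n, le_of_lt hNn, rfl⟩, hnK⟩
      have hDnest : ∀ N, D (N + 1) ⊆ D N := fun N =>
        Set.inter_subset_inter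
          (closure_mono (tailSet_mono x (by exact_mod_cast Nat.le_succ N))) (le_refl K)
      have hDclosed : ∀ N, IsClosed (D N) := fun N => isClosed_closure.inter hKc.isClosed
      have hD0 : IsCompact (D 0) := hKc.inter_left isClosed_closure
      obtain ⟨z, hzmem⟩ :=
        IsCompact.nonempty_iInter_of_sequence_nonempty_isCompact_isClosed D hDnest hDne hD0
          hDclosed
      refine ⟨z, fun N => ?_⟩
      have hz' : z ∈ D N.toNat := by
        have := Set.mem_iInter.1 hzmem N.toNat
        exact this
      exact closure_mono (tailSet_mono x (Int.self_le_toNat N)) hz'.1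
    · -- returns unbounded below: same with x⁻¹
      apply hn
      rw [not_bddBelow_iff] at hdown
      set D : ℕ → Set G := fun N => closure (tailSet x⁻¹ (N : ℤ)) ∩ K with hDdef
      have hDne : ∀ N, (D N).Nonempty := by
        intro N
        obtain ⟨n, hnK, hNn⟩ := hdown (-(N : ℤ))
        refine ⟨x ^ n, subset_closure ⟨-n, Set.mem_Ici.2 (by linarith), ?_⟩, hnK⟩
        simp [inv_zpow]
      have hDnest : ∀ N, D (N + 1) ⊆ D N := fun N =>
        Set.inter_subset_inter
          (closure_mono (tailSet_mono x⁻¹ (by exact_mod_cast Nat.le_succ N))) (le_refl K)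
      have hDclosed : ∀ N, IsClosed (D N) := fun N => isClosed_closure.inter hKc.isClosed
      have hD0 : IsCompact (D 0) := hKc.inter_left isClosed_closure
      obtain ⟨z, hzmem⟩ :=
        IsCompact.nonempty_iInter_of_sequence_nonempty_isCompact_isClosed D hDnest hDne hD0
          hDclosed
      refine ⟨z, fun N => ?_⟩
      have hz' : z ∈ D N.toNat := Set.mem_iInter.1 hzmem N.toNat
      exact closure_mono (tailSet_mono x⁻¹ (Int.self_le_toNat N)) hz'.1
  -- discreteness from finiteness of returns
  have hPfin : ((fun n : ℤ => x ^ n) '' ({n : ℤ | x ^ n ∈ K} \ {0})).Finite :=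
    (hfin.diff).image _
  have hPclosed : IsClosed ((fun n : ℤ => x ^ n) '' ({n : ℤ | x ^ n ∈ K} \ {0})) :=
    hPfin.isClosed
  set U : Set G := interior K \ (fun n : ℤ => x ^ n) '' ({n : ℤ | x ^ n ∈ K} \ {0}) with hUdef
  have hUopen : IsOpen U := isOpen_interior.sdiff hPclosed
  have h1U : (1 : G) ∈ U := by
    constructor
    · exact mem_interior_iff_mem_nhds.2 hKn
    · rintro ⟨n, ⟨hnK, hn0⟩, heq⟩
      exact hx (isOfFinOrder_iff_zpow_eq_one.2 ⟨n, hn0, heq⟩)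
  have hUone : ∀ g ∈ (Subgroup.zpowers x : Set G), g ∈ U → g = 1 := by
    rintro g hg hgU
    rw [Subgroup.coe_zpowers] at hg
    obtain ⟨n, rfl⟩ := hg
    by_cases hn0 : n = 0
    · simp [hn0]
    · exfalso
      exact hgU.2 ⟨n, ⟨show x ^ n ∈ K from interior_subset hgU.1, hn0⟩, rfl⟩
  apply discreteTopology_of_isOpen_singleton_one
  have hset : ({1} : Set (Subgroup.zpowers x)) = (Subtype.val) ⁻¹' U := by
    ext g
    simp only [Set.mem_singleton_iff, Set.mem_preimage]
    constructor
    · rintro rfl; exact h1U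
    · intro h
      exact Subtype.ext (hUone (g : G) g.2 h)
  rw [hset]
  exact hUopen.preimage continuous_subtype_val
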